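/- Let p be a prime. In the polynomial ring ℤ[t₁, t, x₁, x₂, x₃, x₄], let f = −1 − t·x₁⁸ − x₂⁸ − x₃⁸ − x₄⁸ + t₁·x₁x₂x₃x₄. Then the coefficient of the monomial (x₁x₂x₃x₄)^{p−1} in f^{p−1}, regarded as a polynomial in t₁ and t, equals ∑_{k=0}^{⌊(p−1)/8⌋} ((p−1)! / ((k!)⁴ · (4k)! · (p−1−8k)!)) · t^k · t₁^{p−1−8k}. -/

import Mathlib

open MvPolynomial Finset

private noncomputable def vP : Fin 6 → Fin 4 →₀ ℕ :=
  ![0, Finsupp.single 0 8, Finsupp.single 1 8, Finsupp.single 2 8, Finsupp.single 3 8,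
    Finsupp.single 0 1 + Finsupp.single 1 1 + Finsupp.single 2 1 + Finsupp.single 3 1]

private noncomputable def cP (t t₁ : MvPolynomial (Fin 2) ℤ) : Fin 6 → MvPolynomial (Fin 2) ℤ :=
  ![-1, -t, -1, -1, -1, t₁]

private lemma prod_monomial'' {ι σ R : Type*} [CommSemiring R] (s : Finset ι) (e : ι → σ →₀ ℕ)
    (a : ι → R) :
    ∏ i ∈ s, monomial (e i) (a i) = monomial (∑ i ∈ s, e i) (∏ i ∈ s, a i) := by
  classical
  induction s using Finset.induction with
  | empty => simp [monomial_zero']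
  | insert _ _ hi ih => rw [Finset.prod_insert hi, Finset.sum_insert hi, Finset.prod_insert hi, ih,
      monomial_mul]

private lemma Ecoord (a : Fin 6 → ℕ) :
    (∑ i : Fin 6, a i • vP i) =
    Finsupp.equivFunOnFinite.symm ![8 * a 1 + a 5, 8 * a 2 + a 5, 8 * a 3 + a 5, 8 * a 4 + a 5] := by
  have hv5 : vP 5 = Finsupp.single 0 1 + Finsupp.single 1 1 +
      Finsupp.single 2 1 + Finsupp.single 3 1 := rfl
  ext j
  rw [Finsupp.finset_sum_apply]
  have h2 : ∀ j : Fin 4, (Finsupp.equivFunOnFinite.symm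
      ![8 * a 1 + a 5, 8 * a 2 + a 5, 8 * a 3 + a 5, 8 * a 4 + a 5] : Fin 4 →₀ ℕ) j =
      ![8 * a 1 + a 5, 8 * a 2 + a 5, 8 * a 3 + a 5, 8 * a 4 + a 5] j := fun _ => rfl
  rw [h2]
  fin_cases j <;>
    simp [Fin.sum_univ_six, show vP 0 = 0 from rfl, show vP 1 = Finsupp.single 0 8 from rfl,
      show vP 2 = Finsupp.single 1 8 from rfl, show vP 3 = Finsupp.single 2 8 from rfl,
      show vP 4 = Finsupp.single 3 8 from rfl, hv5, Finsupp.single_apply, Finsupp.add_apply] <;>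
    omega

theorem coeff_P41111_pow_int (p : ℕ) (hp : p.Prime)
    (t₁ t : MvPolynomial (Fin 2) ℤ) (ht₁ : t₁ = X 0) (ht : t = X 1)
    (f : MvPolynomial (Fin 4) (MvPolynomial (Fin 2) ℤ))
    (hf : f = - 1 - C t * (X 0) ^ 8 - (X 1) ^ 8 - (X 2) ^ 8 - (X 3) ^ 8
        + C t₁ * (X 0 * X 1 * X 2 * X 3)) :
    MvPolynomial.coeff (Finsupp.equivFunOnFinite.symm fun _ : Fin 4 => p - 1)
        (f ^ (p - 1)) =
      ∑ k ∈ Finset.range ((p - 1) / 8 + 1),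
        ((Nat.factorial (p - 1) /
            ((Nat.factorial k) ^ 4 * Nat.factorial (4 * k) *
              Nat.factorial (p - 1 - 8 * k)) : ℕ) : MvPolynomial (Fin 2) ℤ) *
          t ^ k * t₁ ^ (p - 1 - 8 * k) := by
  clear hp ht ht₁
  classical
  set n := p - 1 with hn
  clear_value n
  clear hn
  have hc0 : cP t t₁ 0 = -1 := rfl
  have hc1 : cP t t₁ 1 = -t := rfl
  have hc2 : cP t t₁ 2 = -1 := rfl
  have hc3 : cP t t₁ 3 = -1 := rfl
  have hc4 : cP t t₁ 4 = -1 := rfl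
  have hc5 : cP t t₁ 5 = t₁ := rfl
  have hfs : f = ∑ i : Fin 6, monomial (vP i) (cP t t₁ i) := by
    rw [hf, Fin.sum_univ_six, hc0, hc1, hc2, hc3, hc4, hc5,
      show vP 0 = 0 from rfl, show vP 1 = Finsupp.single 0 8 from rfl,
      show vP 2 = Finsupp.single 1 8 from rfl, show vP 3 = Finsupp.single 2 8 from rfl,
      show vP 4 = Finsupp.single 3 8 from rfl,
      show vP 5 = Finsupp.single 0 1 + Finsupp.single 1 1 + Finsupp.single 2 1 +
        Finsupp.single 3 1 from rfl]
    simp only [X_pow_eq_monomial, monomial_zero', map_neg, map_one, C_mul_monomial, mul_one]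
    rw [X, X, X, X, monomial_mul, monomial_mul, monomial_mul]
    ring_nf
    rw [C_mul_monomial, mul_one]
  rw [hfs, Finset.sum_pow_eq_sum_piAntidiag]
  have hterm : ∀ k : Fin 6 → ℕ,
      (Nat.multinomial Finset.univ k : MvPolynomial (Fin 4) (MvPolynomial (Fin 2) ℤ)) *
        ∏ i : Fin 6, monomial (vP i) (cP t t₁ i) ^ k i =
      monomial (∑ i : Fin 6, k i • vP i)
        ((Nat.multinomial Finset.univ k : MvPolynomial (Fin 2) ℤ) *
          ∏ i : Fin 6, cP t t₁ i ^ k i) := by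
    intro k
    have hmp : ∀ i : Fin 6, monomial (vP i) (cP t t₁ i) ^ k i =
        monomial (k i • vP i) (cP t t₁ i ^ k i) := by
      intro i; rw [monomial_pow]
    simp_rw [hmp]
    rw [prod_monomial'', ← map_natCast (C : MvPolynomial (Fin 2) ℤ →+* _)
      (Nat.multinomial Finset.univ k), C_mul_monomial]
  simp_rw [hterm]
  rw [coeff_sum]
  simp_rw [coeff_monomial]
  rw [← Finset.sum_filter]
  have hinj : Function.Injective
      (Finsupp.equivFunOnFinite.symm : (Fin 4 → ℕ) → (Fin 4 →₀ ℕ)) :=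
    Equiv.injective _
  refine Finset.sum_nbij' (i := fun k => k 1)
    (j := fun r => ![4 * r, r, r, r, r, n - 8 * r]) ?_ ?_ ?_ ?_ ?_
  · intro a ha
    simp only [Finset.mem_filter, Finset.mem_piAntidiag] at ha
    obtain ⟨⟨hsum, -⟩, heq⟩ := ha
    rw [Ecoord] at heq
    have h0 : 8 * a 1 + a 5 = n := by simpa using congr_fun (hinj heq) 0
    rw [Finset.mem_range]
    show a 1 < n / 8 + 1
    omega
  · intro r hr
    rw [Finset.mem_range] at hr
    have h8 : 8 * r ≤ n := by omega
    simp only [Finset.mem_filter, Finset.mem_piAntidiag]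
    refine ⟨⟨?_, fun i _ => Finset.mem_univ i⟩, ?_⟩
    · rw [Fin.sum_univ_six]
      show 4 * r + r + r + r + r + (n - 8 * r) = n
      omega
    · rw [Ecoord]
      congr 1
      funext j
      fin_cases j <;> show 8 * r + (n - 8 * r) = n <;> omega
  · intro a ha
    simp only [Finset.mem_filter, Finset.mem_piAntidiag] at ha
    obtain ⟨⟨hsum, -⟩, heq⟩ := ha
    rw [Ecoord] at heq
    have hcoord := hinj heq
    have h0 := congr_fun hcoord 0
    have h1 := congr_fun hcoord 1
    have h2 := congr_fun hcoord 2
    have h3 := congr_fun hcoord 3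
    replace h0 : 8 * a 1 + a 5 = n := by simpa using h0
    replace h1 : 8 * a 2 + a 5 = n := by simpa using h1
    replace h2 : 8 * a 3 + a 5 = n := by simpa using h2
    replace h3 : 8 * a 4 + a 5 = n := by simpa using h3
    rw [Fin.sum_univ_six] at hsum
    funext i
    fin_cases i
    · show 4 * a 1 = a 0; omega
    · rfl
    · show a 1 = a 2; omega
    · show a 1 = a 3; omega
    · show a 1 = a 4; omega
    · show n - 8 * a 1 = a 5; omega
  · intro r hr
    rfl
  · intro a ha
    simp only [Finset.mem_filter, Finset.mem_piAntidiag] at ha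
    obtain ⟨⟨hsum, -⟩, heq⟩ := ha
    rw [Ecoord] at heq
    have hcoord := hinj heq
    have h0 := congr_fun hcoord 0
    have h1 := congr_fun hcoord 1
    have h2 := congr_fun hcoord 2
    have h3 := congr_fun hcoord 3
    replace h0 : 8 * a 1 + a 5 = n := by simpa using h0
    replace h1 : 8 * a 2 + a 5 = n := by simpa using h1
    replace h2 : 8 * a 3 + a 5 = n := by simpa using h2
    replace h3 : 8 * a 4 + a 5 = n := by simpa using h3
    rw [Fin.sum_univ_six] at hsum
    set r := a 1 with hr
    have ha0 : a 0 = 4 * r := by omega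
    have ha2 : a 2 = r := by omega
    have ha3 : a 3 = r := by omega
    have ha4 : a 4 = r := by omega
    have ha5 : a 5 = n - 8 * r := by omega
    have h8 : 8 * r ≤ n := by omega
    have hmult : Nat.multinomial Finset.univ a =
        n.factorial / (r.factorial ^ 4 * (4 * r).factorial * (n - 8 * r).factorial) := by
      rw [Nat.multinomial, Fin.sum_univ_six, Fin.prod_univ_six, ha0, ha2, ha3, ha4, ha5,
        show 4 * r + r + r + r + r + (n - 8 * r) = n by omega]
      congr 1
      rw [show r.factorial ^ 4 = r.factorial * r.factorial * r.factorial * r.factorial by ring]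
      ring
    have hprod : ∏ i : Fin 6, cP t t₁ i ^ a i = t ^ r * t₁ ^ (n - 8 * r) := by
      rw [Fin.prod_univ_six, ha0, ha2, ha3, ha4, ha5, hc0, hc1, hc2, hc3, hc4, hc5]
      rw [neg_pow t r, show (-1 : MvPolynomial (Fin 2) ℤ) ^ (4 * r) = 1 by
        rw [pow_mul]; norm_num]
      have hs : ((-1 : MvPolynomial (Fin 2) ℤ) ^ r) ^ 4 = 1 := by
        rw [← pow_mul, mul_comm, pow_mul]; norm_num
      linear_combination (t ^ r * t₁ ^ (n - 8 * r)) * hs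
    rw [hmult, hprod]
    ring
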